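/- There exists a universal constant D > 0 such that for every real t ≥ 1/2, every integer j with |j| ≤ √(8t), and every pair of independent random variables X and Y each having the Poisson distribution with parameter t, one has P((X : ℤ) − (Y : ℤ) = j) ≥ 2·D / √t. -/

import Mathlib

open MeasureTheory
open scoped Nat ENNReal

/-- `X` has the Poisson distribution with parameter `lam` under `μ`. -/
def IsPoisson {Ω : Type} [MeasurableSpace Ω] (μ : Measure Ω) (X : Ω → ℕ) (lam : ℝ) : Prop :=
  ∀ k : ℕ, μ {ω | X ω = k} = ENNReal.ofReal (Real.exp (-lam) * lam ^ k / (Nat.factorial k))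

section aux
open Real

lemma factorial_le_stirling_prv (n : ℕ) (hn : 1 ≤ n) :
    (n ! : ℝ) ≤ Real.exp 1 * Real.sqrt n * ((n : ℝ) / Real.exp 1) ^ n := by
  have hn0 : (0:ℝ) < n := by exact_mod_cast hn
  have hpos : 0 < Real.sqrt (2 * n) * ((n : ℝ) / Real.exp 1) ^ n := by positivity
  have hfac : (0:ℝ) < (n ! : ℝ) := by exact_mod_cast Nat.factorial_pos n
  have hs_pos : 0 < Stirling.stirlingSeq n := by
    rw [Stirling.stirlingSeq]; positivity
  have h1_pos : 0 < Stirling.stirlingSeq 1 := by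
    rw [Stirling.stirlingSeq_one]; positivity
  have hmono := Stirling.log_stirlingSeq'_antitone (Nat.zero_le (n - 1))
  have hsub : n - 1 + 1 = n := Nat.succ_pred_eq_of_pos hn
  have hlog : Real.log (Stirling.stirlingSeq n) ≤ Real.log (Stirling.stirlingSeq 1) := by
    simpa [Function.comp, Nat.succ_eq_add_one, hsub] using hmono
  have hle : Stirling.stirlingSeq n ≤ Stirling.stirlingSeq 1 :=
    (Real.log_le_log_iff hs_pos h1_pos).mp hlog
  rw [Stirling.stirlingSeq, Stirling.stirlingSeq_one] at hle
  have h2 : (n ! : ℝ) ≤ Real.exp 1 / Real.sqrt 2 * (Real.sqrt (2 * n) * ((n : ℝ) / Real.exp 1) ^ n) := by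
    rw [div_le_iff₀ hpos] at hle
    linarith
  have hsqrt : Real.sqrt (2 * n) = Real.sqrt 2 * Real.sqrt n := Real.sqrt_mul (by norm_num) _
  have h2ne : Real.sqrt 2 ≠ 0 := by positivity
  calc (n ! : ℝ) ≤ Real.exp 1 / Real.sqrt 2 * (Real.sqrt (2 * n) * ((n : ℝ) / Real.exp 1) ^ n) := h2
    _ = Real.exp 1 * Real.sqrt n * ((n : ℝ) / Real.exp 1) ^ n := by
        rw [hsqrt]; field_simp

lemma sqrt_t_le_prv (t : ℝ) (ht : 1/2 ≤ t) : Real.sqrt t ≤ 2 * t := by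
  have h0 : (0:ℝ) ≤ t := by linarith
  have hs := Real.sq_sqrt h0
  have hsn := Real.sqrt_nonneg t
  nlinarith [sq_nonneg (2 * Real.sqrt t - 1)]

lemma pmf_lb_prv (t : ℝ) (ht : 1/2 ≤ t) (n : ℕ) (h1 : t ≤ n) (h2 : (n:ℝ) ≤ t + 5 * Real.sqrt t) :
    Real.exp (-26) / 4 / Real.sqrt t ≤ Real.exp (-t) * t ^ n / n ! := by
  have ht0 : (0:ℝ) < t := by linarith
  have hst0 : 0 < Real.sqrt t := Real.sqrt_pos.mpr ht0
  have hst2 : Real.sqrt t ^ 2 = t := Real.sq_sqrt ht0.le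
  have hn1 : 1 ≤ n := by
    rcases Nat.eq_zero_or_pos n with h | h
    · exfalso; rw [h] at h1; norm_num at h1; linarith
    · exact h
  have hn0 : (0:ℝ) < n := by exact_mod_cast hn1
  -- sqrt n ≤ 4 sqrt t
  have hn16 : (n:ℝ) ≤ 16 * t := by
    have := sqrt_t_le_prv t ht
    nlinarith
  have hsn : Real.sqrt n ≤ 4 * Real.sqrt t := by
    have h16 : Real.sqrt ((n:ℝ)) ≤ Real.sqrt (16 * t) := Real.sqrt_le_sqrt hn16
    have : Real.sqrt (16 * t) = 4 * Real.sqrt t := by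
      rw [Real.sqrt_mul (by norm_num), show (16:ℝ) = 4^2 by norm_num, Real.sqrt_sq (by norm_num)]
    linarith [this ▸ h16]
  -- the exponent g
  set g : ℝ := (n : ℝ) - t + n * (Real.log t - Real.log n) with hg
  have hglb : -25 ≤ g := by
    set x : ℝ := (n : ℝ) - t with hx
    have hx0 : 0 ≤ x := by simp [hx]; linarith
    have hx5 : x ≤ 5 * Real.sqrt t := by simp [hx]; linarith
    have hlog : Real.log n - Real.log t ≤ x / t := by
      have h := Real.log_le_sub_one_of_pos (show (0:ℝ) < (n:ℝ)/t by positivity)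
      rw [Real.log_div (ne_of_gt hn0) (ne_of_gt ht0)] at h
      have : (n:ℝ)/t - 1 = x / t := by field_simp [hx]; linarith [hx]
      linarith [this ▸ h]
    have hmul : (n:ℝ) * (Real.log t - Real.log n) ≥ (n:ℝ) * (-(x/t)) := by
      apply mul_le_mul_of_nonneg_left _ hn0.le
      linarith
    have hx2 : x^2 ≤ 25 * t := by nlinarith
    have hkey : x + (n:ℝ) * (-(x/t)) = -(x^2)/t := by
      field_simp [hx]; ring
    have hge : -(x^2)/t ≤ g := by rw [hg, ← hkey]; linarith
    have hq : x^2/t ≤ 25 := by rw [div_le_iff₀ ht0]; linarith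
    have h25 : (-25:ℝ) ≤ -(x^2)/t := by rw [neg_div]; linarith
    linarith
  -- rewrite exp g
  have hexp_eq : Real.exp g * ((n:ℝ) / Real.exp 1) ^ n = Real.exp (-t) * t ^ n := by
    have h1' : Real.exp ((n:ℝ) * (Real.log t - Real.log n)) = (t / n) ^ n := by
      rw [← Real.log_div (ne_of_gt ht0) (ne_of_gt hn0), Real.exp_nat_mul,
        Real.exp_log (by positivity)]
    have h2' : Real.exp g = Real.exp ((n:ℝ) - t) * (t / n) ^ n := by
      rw [hg, Real.exp_add, h1']
    rw [h2']
    have hen : Real.exp ((n:ℝ)) = Real.exp 1 ^ n := by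
      rw [← Real.exp_nat_mul]; ring_nf
    rw [Real.exp_sub, div_pow, div_pow, hen, Real.exp_neg]
    field_simp
  -- main chain
  have hfac := factorial_le_stirling_prv n hn1
  have hfacpos : (0:ℝ) < (n ! : ℝ) := by exact_mod_cast Nat.factorial_pos n
  have hpow_pos : (0:ℝ) < ((n:ℝ) / Real.exp 1) ^ n := by positivity
  have step1 : Real.exp (-t) * t ^ n / (Real.exp 1 * Real.sqrt n * ((n:ℝ) / Real.exp 1) ^ n)
      ≤ Real.exp (-t) * t ^ n / n ! := by
    apply div_le_div_of_nonneg_left (by positivity) hfacpos hfac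
  have step2 : Real.exp (-26) / 4 / Real.sqrt t ≤
      Real.exp (-t) * t ^ n / (Real.exp 1 * Real.sqrt n * ((n:ℝ) / Real.exp 1) ^ n) := by
    have hrw : Real.exp (-t) * t ^ n / (Real.exp 1 * Real.sqrt n * ((n:ℝ) / Real.exp 1) ^ n)
        = Real.exp g / (Real.exp 1 * Real.sqrt n) := by
      rw [← hexp_eq]
      field_simp
    rw [hrw]
    have hnum : Real.exp (-26) = Real.exp (-25) / Real.exp 1 := by
      rw [← Real.exp_sub]; norm_num
    have hglb' : Real.exp (-25) ≤ Real.exp g := Real.exp_le_exp.mpr hglb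
    have hden : Real.exp 1 * Real.sqrt n ≤ Real.exp 1 * (4 * Real.sqrt t) := by
      apply mul_le_mul_of_nonneg_left hsn (Real.exp_pos 1).le
    have hdpos : 0 < Real.exp 1 * Real.sqrt n := by positivity
    calc Real.exp (-26) / 4 / Real.sqrt t = Real.exp (-25) / (Real.exp 1 * (4 * Real.sqrt t)) := by
          rw [hnum]; field_simp
      _ ≤ Real.exp g / (Real.exp 1 * Real.sqrt n) := by
          apply div_le_div₀ (Real.exp_pos g).le hglb' hdpos hden
  linarith

end aux

theorem skellam_local_limit_lower_bound :
    ∃ D > (0 : ℝ), ∀ t : ℝ, (1 : ℝ) / 2 ≤ t →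
      ∀ j : ℤ, |(j : ℝ)| ≤ Real.sqrt (8 * t) →
        ∀ (Ω : Type) [MeasurableSpace Ω] (μ : Measure Ω) [IsProbabilityMeasure μ]
          (X Y : Ω → ℕ), IsPoisson μ X t → IsPoisson μ Y t →
            ProbabilityTheory.IndepFun X Y μ →
            ENNReal.ofReal (2 * D / Real.sqrt t) ≤ μ {ω | (X ω : ℤ) - (Y ω : ℤ) = j} := by
  classical
  refine ⟨Real.exp (-52) / 64, by positivity, ?_⟩
  intro t ht j hj Ω _ μ _ X Y hX hY hindep
  have ht0 : (0:ℝ) < t := by linarith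
  have hst0 : 0 < Real.sqrt t := Real.sqrt_pos.mpr ht0
  have hss : Real.sqrt t * Real.sqrt t = t := Real.mul_self_sqrt ht0.le
  set a : ℕ → ℝ := fun k => Real.exp (-t) * t ^ k / k ! with ha
  have ha0 : ∀ k, 0 ≤ a k := fun k => by
    simp only [ha]; positivity
  set p : ℕ → ℝ≥0∞ := fun k => ENNReal.ofReal (a k) with hp
  have hXk : ∀ k, μ (X ⁻¹' {k}) = p k := fun k => hX k
  have hYk : ∀ k, μ (Y ⁻¹' {k}) = p k := fun k => hY k
  -- sum of pmf is 1
  have hasum : HasSum a 1 := by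
    have h := ProbabilityTheory.poissonPMFRealSum ⟨t, ht0.le⟩
    exact h
  have hpsum : ∑' k, p k = 1 := by
    rw [hp, ← ENNReal.ofReal_tsum_of_nonneg ha0 hasum.summable, hasum.tsum_eq,
      ENNReal.ofReal_one]
  have hprod : ∑' q : ℕ × ℕ, p q.1 * p q.2 = 1 := by
    rw [ENNReal.tsum_prod']
    simp_rw [ENNReal.tsum_mul_left, hpsum, mul_one]
    exact hpsum
  set E : Set Ω := {ω | (X ω : ℤ) - (Y ω : ℤ) = j} with hE
  have hind : ∀ q : ℕ × ℕ, μ (X ⁻¹' {q.1} ∩ Y ⁻¹' {q.2}) = p q.1 * p q.2 := fun q => by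
    rw [hindep.measure_inter_preimage_eq_mul _ _ (measurableSet_singleton q.1)
      (measurableSet_singleton q.2), hXk, hYk]
  set f : ℕ × ℕ → ℝ≥0∞ := fun q => if (q.1:ℤ) - q.2 = j then 0 else p q.1 * p q.2 with hf
  set g : ℕ × ℕ → ℝ≥0∞ := fun q => if (q.1:ℤ) - q.2 = j then p q.1 * p q.2 else 0 with hgdef
  have hfle : ∑' q, f q ≤ 1 := by
    rw [← hprod]
    exact ENNReal.tsum_le_tsum fun q => by
      by_cases h : (q.1:ℤ) - q.2 = j <;> simp [hf, h]
  have hcompl : μ Eᶜ ≤ ∑' q, f q := by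
    have hsub : Eᶜ ⊆ ⋃ q : ℕ × ℕ,
        (if (q.1:ℤ) - q.2 = j then (∅ : Set Ω) else X ⁻¹' {q.1} ∩ Y ⁻¹' {q.2}) := by
      intro ω hω
      have hω' : ¬ ((X ω : ℤ) - (Y ω : ℤ) = j) := hω
      refine Set.mem_iUnion.mpr ⟨(X ω, Y ω), ?_⟩
      rw [if_neg hω']
      exact ⟨rfl, rfl⟩
    calc μ Eᶜ ≤ μ (⋃ q : ℕ × ℕ,
          (if (q.1:ℤ) - q.2 = j then (∅ : Set Ω) else X ⁻¹' {q.1} ∩ Y ⁻¹' {q.2})) :=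
          measure_mono hsub
      _ ≤ ∑' q : ℕ × ℕ, μ (if (q.1:ℤ) - q.2 = j then (∅ : Set Ω)
            else X ⁻¹' {q.1} ∩ Y ⁻¹' {q.2}) := measure_iUnion_le _
      _ = ∑' q, f q := tsum_congr fun q => by
          by_cases h : (q.1:ℤ) - q.2 = j <;> simp [hf, h, hind q]
  have hkey : ∑' q, g q ≤ μ E := by
    have h1 : (1:ℝ≥0∞) ≤ μ E + μ Eᶜ := by
      have := measure_union_le (μ := μ) E Eᶜ
      rw [Set.union_compl_self, measure_univ] at this
      exact this
    have h2 : ∑' q, g q + ∑' q, f q = 1 := by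
      rw [← ENNReal.tsum_add, ← hprod]
      exact tsum_congr fun q => by
        by_cases h : (q.1:ℤ) - q.2 = j <;> simp [hf, hgdef, h]
    have hfne : ∑' q, f q ≠ ∞ := ne_top_of_le_ne_top ENNReal.one_ne_top hfle
    refine (ENNReal.add_le_add_iff_right hfne).mp ?_
    rw [h2]
    exact h1.trans (add_le_add_right hcompl _)
  -- the finite set of diagonal indices
  set jp : ℕ := j.toNat with hjp
  set N : ℕ := ⌈t⌉₊ + jp with hN
  set M : ℕ := ⌊2 * Real.sqrt t⌋₊ with hM
  set S : Finset ℕ := Finset.Ico N (N + M) with hS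
  set mk : ℕ → ℕ := fun k => ((k:ℤ) - j).toNat with hmk
  -- basic real bounds
  have hjabs : |(j:ℝ)| ≤ 3 * Real.sqrt t := by
    have h9 : Real.sqrt (8*t) ≤ Real.sqrt (9*t) := Real.sqrt_le_sqrt (by linarith)
    have h9' : Real.sqrt (9*t) = 3 * Real.sqrt t := by
      rw [Real.sqrt_mul (by norm_num), show (9:ℝ) = 3^2 by norm_num,
        Real.sqrt_sq (by norm_num)]
    linarith
  have hjp_abs : (jp:ℝ) ≤ |(j:ℝ)| := by
    rcases le_or_gt 0 j with h | h
    · have h' : ((jp:ℤ):ℝ) = (j:ℝ) := by rw [hjp, Int.toNat_of_nonneg h]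
      have : (jp:ℝ) = (j:ℝ) := by push_cast at h' ⊢; exact h'
      rw [this]; exact le_abs_self _
    · have h0 : jp = 0 := by rw [hjp]; omega
      rw [h0]; simp [abs_nonneg]
  have hjpj : (j:ℝ) ≤ (jp:ℝ) := by
    have := Int.self_le_toNat j
    exact_mod_cast this
  have hNlb : t + (jp:ℝ) ≤ (N:ℝ) := by
    have := Nat.le_ceil t
    rw [hN]; push_cast; linarith
  have hNub : (N:ℝ) ≤ t + 1 + (jp:ℝ) := by
    have := Nat.ceil_lt_add_one ht0.le
    rw [hN]; push_cast; linarith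
  have hM1 : (M:ℝ) ≤ 2 * Real.sqrt t := Nat.floor_le (by positivity)
  have hM2 : 2 * Real.sqrt t - 1 ≤ (M:ℝ) := by
    have := Nat.lt_floor_add_one (2 * Real.sqrt t)
    rw [hM]; linarith
  have hMcard : Real.sqrt t / 2 ≤ (M:ℝ) := by
    have h23 : (2:ℝ)/3 ≤ Real.sqrt t := by
      have h' : Real.sqrt (4/9) ≤ Real.sqrt t := Real.sqrt_le_sqrt (by linarith)
      rw [show (4:ℝ)/9 = (2/3)^2 by norm_num, Real.sqrt_sq (by norm_num)] at h'
      linarith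
    linarith
  have hjkS : ∀ k ∈ S, j ≤ (k:ℤ) := by
    intro k hk
    have h1 : jp ≤ k := le_trans (Nat.le_add_left jp ⌈t⌉₊) (Finset.mem_Ico.mp hk).1
    calc j ≤ (jp:ℤ) := Int.self_le_toNat j
      _ ≤ (k:ℤ) := by exact_mod_cast h1
  have hmkZ : ∀ k ∈ S, (mk k : ℤ) = (k:ℤ) - j := by
    intro k hk
    rw [hmk]
    exact Int.toNat_of_nonneg (by linarith [hjkS k hk])
  -- per-term lower bound
  have hterm : ∀ k ∈ S, Real.exp (-52)/16/t ≤ a k * a (mk k) := by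
    intro k hk
    obtain ⟨hk1, hk2⟩ := Finset.mem_Ico.mp hk
    have hkR1 : (N:ℝ) ≤ (k:ℝ) := by exact_mod_cast hk1
    have hkR2 : (k:ℝ) + 1 ≤ (N:ℝ) + (M:ℝ) := by exact_mod_cast hk2
    have hjp0 : (0:ℝ) ≤ (jp:ℝ) := Nat.cast_nonneg jp
    have hkt : t ≤ (k:ℝ) := by linarith
    have hkub5 : (k:ℝ) ≤ t + 5 * Real.sqrt t := by
      have : (jp:ℝ) ≤ 3 * Real.sqrt t := le_trans hjp_abs hjabs
      linarith
    have hmkR : (mk k : ℝ) = (k:ℝ) - (j:ℝ) := by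
      have h := hmkZ k hk
      exact_mod_cast h
    have hmt : t ≤ (mk k:ℝ) := by rw [hmkR]; linarith
    have hmub : (mk k:ℝ) ≤ t + 5 * Real.sqrt t := by
      rw [hmkR]
      have h' : (jp:ℝ) - (j:ℝ) ≤ |(j:ℝ)| := by
        rcases le_or_gt 0 j with h | h
        · have h'' : (jp:ℝ) = (j:ℝ) := by
            have h2 := Int.toNat_of_nonneg h
            rw [hjp]; exact_mod_cast h2
          rw [h'']; simpa using abs_nonneg (j:ℝ)
        · have h0 : jp = 0 := by rw [hjp]; omega
          rw [h0]; simpa using neg_le_abs (j:ℝ)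
      linarith
    have b1 := pmf_lb_prv t ht k hkt hkub5
    have b2 := pmf_lb_prv t ht (mk k) hmt hmub
    have hb0 : (0:ℝ) ≤ Real.exp (-26)/4/Real.sqrt t := by positivity
    have hmul : (Real.exp (-26)/4/Real.sqrt t) * (Real.exp (-26)/4/Real.sqrt t)
        ≤ a k * a (mk k) := by
      apply mul_le_mul b1 b2 hb0 (le_trans hb0 b1)
    have hee : Real.exp (-26) * Real.exp (-26) = Real.exp (-52) := by
      rw [← Real.exp_add]; norm_num
    have heq : Real.exp (-52)/16/t
        = (Real.exp (-26)/4/Real.sqrt t) * (Real.exp (-26)/4/Real.sqrt t) := by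
      rw [← hee, ← hss]; field_simp; rw [Real.sqrt_sq hst0.le]; ring
    rw [heq]; exact hmul
  -- sum lower bound (real)
  have hcard : S.card = M := by rw [hS]; simp
  have hsum_lb : 2 * (Real.exp (-52)/64) / Real.sqrt t ≤ ∑ k ∈ S, a k * a (mk k) := by
    have h := Finset.card_nsmul_le_sum S (fun k => a k * a (mk k))
      (Real.exp (-52)/16/t) hterm
    rw [hcard, nsmul_eq_mul] at h
    have h2 : 2 * (Real.exp (-52)/64) / Real.sqrt t ≤ (M:ℝ) * (Real.exp (-52)/16/t) := by
      have h1 : Real.sqrt t / 2 * (Real.exp (-52)/16/t) ≤ (M:ℝ) * (Real.exp (-52)/16/t) :=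
        mul_le_mul_of_nonneg_right hMcard (by positivity)
      have h3 : 2 * (Real.exp (-52)/64) / Real.sqrt t
          = Real.sqrt t / 2 * (Real.exp (-52)/16/t) := by
        rw [← hss]; field_simp; rw [Real.sqrt_sq hst0.le]; ring
      linarith
    linarith
  -- conclude in ℝ≥0∞
  set T : Finset (ℕ × ℕ) := S.image (fun k => (k, mk k)) with hT
  have hTsum : ∑ q ∈ T, g q = ∑ k ∈ S, p k * p (mk k) := by
    rw [hT, Finset.sum_image (by intro x _ y _ h; exact (Prod.mk.injEq _ _ _ _).mp h |>.1)]
    refine Finset.sum_congr rfl fun k hk => ?_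
    have : (k:ℤ) - (mk k : ℤ) = j := by
      rw [hmkZ k hk]; ring
    simp [hgdef, this]
  calc ENNReal.ofReal (2 * (Real.exp (-52)/64) / Real.sqrt t)
      ≤ ENNReal.ofReal (∑ k ∈ S, a k * a (mk k)) := ENNReal.ofReal_le_ofReal hsum_lb
    _ = ∑ k ∈ S, ENNReal.ofReal (a k * a (mk k)) :=
        ENNReal.ofReal_sum_of_nonneg fun k _ => mul_nonneg (ha0 k) (ha0 (mk k))
    _ = ∑ k ∈ S, p k * p (mk k) := Finset.sum_congr rfl fun k _ =>
        ENNReal.ofReal_mul (ha0 k)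
    _ = ∑ q ∈ T, g q := hTsum.symm
    _ ≤ ∑' q, g q := ENNReal.sum_le_tsum T
    _ ≤ μ E := hkey
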